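/- With notation as above, the GRM code C_ν(m,q) ⊆ F_q[G] of order ν (1 ≤ ν ≤ m(q−1)−1) is generated as an F_q-vector space by the set K_ν = {θ_0^0} ∪ {θ_i^j : 1 ≤ i ≤ ν, 0 ≤ j ≤ N(m(q−1)−i) − 1}, where θ_i^j = φ(z^j f_i(z)); moreover these elements are linearly independent and #K_ν = dim_{F_q} C_ν(m,q). -/

import Mathlib

set_option synthInstance.maxHeartbeats 1000000
set_option maxHeartbeats 2000000

open Polynomial Finset

open Polynomial Finset

/-- Monic polynomials with pairwise distinct degrees are linearly independent. -/
lemma aux_li {F : Type*} [Field F] {ι : Type*} [DecidableEq ι] (P : ι → Polynomial F)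
    (hm : ∀ i, (P i).Monic) (hd : Function.Injective fun i => (P i).natDegree) :
    LinearIndependent F P := by
  rw [linearIndependent_iff']
  intro s c hsum
  by_contra hc
  push_neg at hc
  obtain ⟨i₀, hi₀s, hi₀⟩ := hc
  classical
  set t := s.filter (fun i => c i ≠ 0) with ht
  have htne : t.Nonempty := ⟨i₀, Finset.mem_filter.2 ⟨hi₀s, hi₀⟩⟩
  obtain ⟨j, hjt, hjmax⟩ := t.exists_max_image (fun i => (P i).natDegree) htne
  have hcj : c j ≠ 0 := (Finset.mem_filter.1 hjt).2
  have hsum' : ∑ i ∈ t, c i • P i = 0 := by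
    rw [ht, Finset.sum_filter_of_ne, hsum]
    intro x _ hx hcx
    exact hx (by simp [hcx])
  have := congrArg (fun p => Polynomial.coeff p ((P j).natDegree)) hsum'
  simp only [Polynomial.finset_sum_coeff, Polynomial.coeff_smul, smul_eq_mul,
    Polynomial.coeff_zero] at this
  rw [Finset.sum_eq_single j] at this
  · rw [(hm j).coeff_natDegree, mul_one] at this
    exact hcj this
  · intro i hit hij
    have hlt : (P i).natDegree < (P j).natDegree :=
      lt_of_le_of_ne (hjmax i hit) (fun h => hij (hd h))
    rw [Polynomial.coeff_eq_zero_of_natDegree_lt hlt, mul_zero]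
  · intro h; exact absurd hjt h

/-- Base-q digit expansion. -/
lemma aux_digits (q : ℕ) (hq : 2 ≤ q) :
    ∀ m k, k < q ^ m → ∑ l ∈ Finset.range m, (k / q ^ l % q) * q ^ l = k := by
  intro m
  induction m with
  | zero => intro k hk; simp at hk ⊢; omega
  | succ m ih =>
    intro k hk
    have hq0 : 0 < q := by omega
    have hkq : k / q < q ^ m := by
      rw [Nat.div_lt_iff_lt_mul hq0]; rw [pow_succ] at hk; exact hk
    have := ih (k / q) hkq
    rw [Finset.sum_range_succ'] 
    simp only [pow_zero, Nat.div_one, mul_one, pow_succ]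
    calc (∑ l ∈ Finset.range m, k / (q ^ l * q) % q * (q ^ l * q)) + k % q
        = (∑ l ∈ Finset.range m, (k / q) / q ^ l % q * q ^ l) * q + k % q := by
          rw [Finset.sum_mul]
          congr 1
          refine Finset.sum_congr rfl fun l _ => ?_
          rw [mul_comm (q ^ l) q, Nat.div_div_eq_div_mul, mul_assoc, mul_comm q (q^l)]
      _ = (k / q) * q + k % q := by rw [this]
      _ = k := Nat.div_add_mod' k q

lemma aux_geom (q : ℕ) (hq : 2 ≤ q) (m : ℕ) :
    ∑ l ∈ Finset.range m, (q - 1) * q ^ l = q ^ m - 1 := by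
  induction m with
  | zero => simp
  | succ m ih =>
    rw [Finset.sum_range_succ, ih, Nat.sub_mul, one_mul, pow_succ, mul_comm (q^m) q]
    have h1 : 1 ≤ q ^ m := Nat.one_le_pow _ _ (by omega)
    have h2 : q ^ m ≤ q * q ^ m := Nat.le_mul_of_pos_left _ (by omega)
    omega

lemma aux_digit_max (q : ℕ) (hq : 2 ≤ q) {l m : ℕ} (hl : l < m) :
    (q ^ m - 1) / q ^ l % q = q - 1 := by
  have h1 : 0 < q ^ l := Nat.pow_pos (by omega)
  have h2 : 1 ≤ q ^ (m - l - 1) := Nat.one_le_pow _ _ (by omega)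
  set b := q ^ (m - l - 1) with hb
  have hsplit : q ^ m = q ^ l * (q * b) := by
    rw [hb, ← pow_succ', ← pow_add]; congr 1; omega
  have hqb : 1 ≤ q * b := by nlinarith
  have hdiv : (q ^ m - 1) / q ^ l = q * b - 1 := by
    rw [hsplit]
    have key : q ^ l * (q * b) - 1 = q ^ l * (q * b - 1) + (q ^ l - 1) := by
      rw [Nat.mul_sub, mul_one]
      have : q ^ l ≤ q ^ l * (q * b) := Nat.le_mul_of_pos_right _ (by omega)
      omega
    rw [key, Nat.mul_add_div h1, Nat.div_eq_of_lt (by omega), add_zero]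
  rw [hdiv]
  have key2 : q * b - 1 = q * (b - 1) + (q - 1) := by
    rw [Nat.mul_sub, mul_one]
    have : q ≤ q * b := Nat.le_mul_of_pos_right _ (by omega)
    omega
  rw [key2, Nat.mul_add_mod, Nat.mod_eq_of_lt (by omega)]

lemma aux_omega_le (q : ℕ) (hq : 2 ≤ q) (m k : ℕ) :
    ∑ l ∈ Finset.range m, k / q ^ l % q ≤ m * (q - 1) := by
  calc ∑ l ∈ Finset.range m, k / q ^ l % q ≤ ∑ l ∈ Finset.range m, (q - 1) :=
        Finset.sum_le_sum fun l _ => by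
          have := Nat.mod_lt (k / q ^ l) (show 0 < q by omega); omega
    _ = m * (q - 1) := by simp [Finset.sum_const, mul_comm]

lemma aux_omega_eq_zero (q : ℕ) (hq : 2 ≤ q) {m k : ℕ} (hk : k < q ^ m) :
    (∑ l ∈ Finset.range m, k / q ^ l % q) = 0 ↔ k = 0 := by
  constructor
  · intro h
    have hd := aux_digits q hq m k hk
    rw [← hd]
    apply Finset.sum_eq_zero
    intro l hl
    have : k / q ^ l % q = 0 := by
      have := Finset.sum_eq_zero_iff.1 h l hl
      exact this
    simp [this]
  · rintro rfl; simp

lemma aux_omega_eq_max (q : ℕ) (hq : 2 ≤ q) {m k : ℕ} (hk : k < q ^ m) :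
    (∑ l ∈ Finset.range m, k / q ^ l % q) = m * (q - 1) ↔ k = q ^ m - 1 := by
  constructor
  · intro h
    have hdigs : ∀ l ∈ Finset.range m, k / q ^ l % q = q - 1 := by
      by_contra hc
      push_neg at hc
      obtain ⟨l₀, hl₀, hne⟩ := hc
      have hlt : ∑ l ∈ Finset.range m, k / q ^ l % q < ∑ l ∈ Finset.range m, (q - 1) := by
        apply Finset.sum_lt_sum
        · intro l _
          have := Nat.mod_lt (k / q ^ l) (show 0 < q by omega); omega
        · refine ⟨l₀, hl₀, ?_⟩
          have := Nat.mod_lt (k / q ^ l₀) (show 0 < q by omega); omega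
      rw [h] at hlt
      simp [Finset.sum_const, mul_comm] at hlt
    have hd := aux_digits q hq m k hk
    rw [← hd]
    rw [Finset.sum_congr rfl fun l hl => by rw [hdigs l hl]]
    exact aux_geom q hq m
  · rintro rfl
    rw [Finset.sum_congr rfl fun l hl => aux_digit_max q hq (Finset.mem_range.1 hl)]
    simp [Finset.sum_const, mul_comm]

/-- The GRM code `C_ν(m,q) ⊆ F_q[G]` of order `ν` (`1 ≤ ν ≤ m(q-1)-1`) is generated as an
`F_q`-vector space by `K_ν = {θ_0^0} ∪ {θ_i^j : 1 ≤ i ≤ ν, 0 ≤ j ≤ N(m(q-1)-i) - 1}`,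
where `θ_i^j = φ(z^j f_i(z))`; moreover these elements are linearly independent and
`#K_ν = dim_{F_q} C_ν(m,q)`. -/
theorem GRM_generating_set (p r m q : ℕ) (hp : p.Prime) (hr : 1 ≤ r) (hm : 1 ≤ m)
    (hq : q = p ^ r) [NeZero q]
    (Fq : Type*) [Field Fq] [Fintype Fq] (hFq : Fintype.card Fq = q)
    (K : Type*) [Field K] [Fintype K] (hK : Fintype.card K = q ^ m) [Algebra Fq K]
    (γ : Kˣ) (hγ : ∀ u : Kˣ, u ∈ Subgroup.zpowers γ)
    (ω : ℕ → ℕ) (hω : ∀ i, ω i = ∑ l ∈ Finset.range m, i / q ^ l % q)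
    (N : ℕ → ℕ)
    (hN : ∀ t, N t = ((Finset.range (q ^ m)).filter (fun k => ω k = t)).card)
    (g : Fin (q ^ m - 1) → (Fin m → ZMod q)) (hginj : Function.Injective g)
    (hgsurj : ∀ x : Fin m → ZMod q, x ≠ 0 → ∃ i, g i = x)
    (φ : (Polynomial Fq ⧸ (Ideal.span {Polynomial.X ^ (q ^ m - 1) - 1} :
            Ideal (Polynomial Fq))) →ₗ[Fq] AddMonoidAlgebra Fq (Fin m → ZMod q))
    (hφinj : Function.Injective φ)
    (hφ : ∀ f : Polynomial Fq, f.natDegree < q ^ m - 1 →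
      φ (Ideal.Quotient.mk _ f) =
        AddMonoidAlgebra.single (0 : Fin m → ZMod q)
            (-(∑ i ∈ Finset.range (q ^ m - 1), f.coeff i)) +
          ∑ i : Fin (q ^ m - 1), AddMonoidAlgebra.single (g i) (f.coeff (i : ℕ)))
    (Fpoly : ℕ → Polynomial Fq)
    (hFpoly : ∀ k, (Fpoly k).map (algebraMap Fq K) =
      ∏ i ∈ (Finset.range (q ^ m)).filter
          (fun i => 0 < ω i ∧ ω i ≤ m * (q - 1) - k - 1),
        (Polynomial.X - Polynomial.C ((γ : K) ^ i)))
    (Code : ℕ → Submodule Fq (AddMonoidAlgebra Fq (Fin m → ZMod q)))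
    (hCode : ∀ k, Code k = Submodule.map φ
      (Submodule.restrictScalars Fq (Ideal.span {Ideal.Quotient.mk _ (Fpoly k)})))
    (θ : ℕ → ℕ → AddMonoidAlgebra Fq (Fin m → ZMod q))
    (hθ : ∀ i j, θ i j = φ (Ideal.Quotient.mk _ (Polynomial.X ^ j * Fpoly i)))
    (ν : ℕ) (hν1 : 1 ≤ ν) (hν2 : ν ≤ m * (q - 1) - 1) :
    LinearIndependent Fq
        (fun x : {ij : ℕ × ℕ // ij = (0, 0) ∨
            (1 ≤ ij.1 ∧ ij.1 ≤ ν ∧ ij.2 < N (m * (q - 1) - ij.1))} =>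
          θ x.1.1 x.1.2) ∧
      Submodule.span Fq
          (Set.range (fun x : {ij : ℕ × ℕ // ij = (0, 0) ∨
              (1 ≤ ij.1 ∧ ij.1 ≤ ν ∧ ij.2 < N (m * (q - 1) - ij.1))} =>
            θ x.1.1 x.1.2)) = Code ν ∧
      Nat.card {ij : ℕ × ℕ // ij = (0, 0) ∨
          (1 ≤ ij.1 ∧ ij.1 ≤ ν ∧ ij.2 < N (m * (q - 1) - ij.1))} =
        Module.finrank Fq (Code ν) := by
  classical
  -- basic numerology
  have hq2 : 2 ≤ q := by
    rw [hq]; calc 2 = 2 ^ 1 := rfl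
    _ ≤ p ^ r := Nat.pow_le_pow_left hp.two_le r |>.trans' (Nat.pow_le_pow_right (by omega) hr)
  set M := m * (q - 1) with hM
  have hQ2 : 2 ≤ q ^ m := by
    calc 2 ≤ q := hq2
    _ = q ^ 1 := (pow_one q).symm
    _ ≤ q ^ m := Nat.pow_le_pow_right (by omega) hm
  have hn1 : 1 ≤ q ^ m - 1 := by omega
  have hM2 : 2 ≤ M := by
    rcases Nat.lt_or_ge M 2 with h | h
    · interval_cases M <;> omega
    · exact h
  -- facts about ω
  have hωle : ∀ k, ω k ≤ M := fun k => by rw [hω]; exact aux_omega_le q hq2 m k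
  have hω0 : ∀ k, k < (q ^ m) → (ω k = 0 ↔ k = 0) := fun k hk => by
    rw [hω]; exact aux_omega_eq_zero q hq2 hk
  have hωM : ∀ k, k < (q ^ m) → (ω k = M ↔ k = (q ^ m) - 1) := fun k hk => by
    rw [hω]; exact aux_omega_eq_max q hq2 hk
  -- the root sets and degrees
  set S : ℕ → Finset ℕ :=
    fun i => (Finset.range (q ^ m)).filter (fun k => 0 < ω k ∧ ω k ≤ M - i - 1) with hS
  set D : ℕ → ℕ := fun i => (S i).card with hD
  have hmono : ∀ i i', i ≤ i' → S i' ⊆ S i := by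
    intro i i' h k hk
    simp only [hS, Finset.mem_filter] at hk ⊢
    exact ⟨hk.1, hk.2.1, by omega⟩
  have hDmono : ∀ i i', i ≤ i' → D i' ≤ D i := fun i i' h =>
    Finset.card_le_card (hmono i i' h)
  -- D 0 = (q ^ m - 1) - 1
  have hS0 : S 0 = ((Finset.range (q ^ m)).erase ((q ^ m) - 1)).erase 0 := by
    ext k
    simp only [hS, Finset.mem_filter, Finset.mem_erase, Finset.mem_range]
    constructor
    · rintro ⟨hk, h1, h2⟩
      have hk0 : k ≠ 0 := fun h => by rw [(hω0 k hk).2 h] at h1; omega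
      have hkQ : k ≠ (q ^ m) - 1 := fun h => by
        have := (hωM k hk).2 h; omega
      exact ⟨hk0, hkQ, hk⟩
    · rintro ⟨hk0, hkQ, hk⟩
      refine ⟨hk, ?_, ?_⟩
      · have := (hω0 k hk).not.2 hk0; omega
      · have h1 := (hωM k hk).not.2 hkQ
        have h2 := hωle k
        omega
  have hD0 : D 0 = (q ^ m - 1) - 1 := by
    show (S 0).card = (q ^ m - 1) - 1
    rw [hS0, Finset.card_erase_of_mem, Finset.card_erase_of_mem, Finset.card_range]
    · exact Finset.mem_range.2 (by omega)
    · exact Finset.mem_erase.2 ⟨by omega, Finset.mem_range.2 (by omega)⟩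
  -- D step relation
  have hDstep : ∀ i, 1 ≤ i → i ≤ ν → D (i - 1) = D i + N (M - i) := by
    intro i hi1 hiν
    have hiM : i + 1 ≤ M := by omega
    have hsplit : S (i - 1) = S i ∪ (Finset.range (q ^ m)).filter (fun k => ω k = M - i) := by
      ext k
      simp only [hS, Finset.mem_union, Finset.mem_filter, Finset.mem_range]
      constructor
      · rintro ⟨hk, h1, h2⟩
        have : M - (i - 1) - 1 = M - i := by omega
        rw [this] at h2
        rcases Nat.lt_or_ge (ω k) (M - i) with h | h
        · exact Or.inl ⟨hk, h1, by omega⟩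
        · exact Or.inr ⟨hk, by omega⟩
      · have : M - (i - 1) - 1 = M - i := by omega
        rintro (⟨hk, h1, h2⟩ | ⟨hk, h1⟩)
        · exact ⟨hk, h1, by omega⟩
        · exact ⟨hk, by omega, by omega⟩
    have hdisj : Disjoint (S i) ((Finset.range (q ^ m)).filter (fun k => ω k = M - i)) := by
      rw [Finset.disjoint_left]
      intro k hk1 hk2
      simp only [hS, Finset.mem_filter] at hk1 hk2
      omega
    show (S (i-1)).card = (S i).card + N (M - i)
    rw [hsplit, Finset.card_union_of_disjoint hdisj, hN]
  -- order of γ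
  have hγord : orderOf γ = (q ^ m - 1) := by
    rw [orderOf_eq_card_of_forall_mem_zpowers hγ, Nat.card_eq_fintype_card,
      Fintype.card_units, hK]
  -- Fpoly facts
  have halginj : Function.Injective (algebraMap Fq K) := (algebraMap Fq K).injective
  have hmapeq : ∀ i, (Fpoly i).map (algebraMap Fq K) =
      ∏ k ∈ S i, (X - C ((γ : K) ^ k)) := fun i => hFpoly i
  have hmonic : ∀ i, (Fpoly i).Monic := by
    intro i
    apply Polynomial.monic_of_injective halginj
    rw [hmapeq]
    exact monic_prod_of_monic _ _ fun k _ => monic_X_sub_C _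
  have hdeg : ∀ i, (Fpoly i).natDegree = D i := by
    intro i
    rw [← (hmonic i).natDegree_map (algebraMap Fq K), hmapeq,
      Polynomial.natDegree_prod_of_monic _ _ (fun k _ => monic_X_sub_C _)]
    show (∑ k ∈ S i, (X - C ((γ:K) ^ k)).natDegree) = (S i).card
    rw [Finset.sum_congr rfl fun k _ => natDegree_X_sub_C _, Finset.sum_const, smul_eq_mul, mul_one]
  have hdvd : ∀ i i', i ≤ i' → Fpoly i' ∣ Fpoly i := by
    intro i i' h
    rw [← Polynomial.map_dvd_map' (algebraMap Fq K), hmapeq, hmapeq]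
    exact Finset.prod_dvd_prod_of_subset _ _ _ (hmono i i' h)
  -- Fpoly ν ∣ X^(q ^ m - 1) - 1
  have hXn : Fpoly ν ∣ (X ^ (q ^ m - 1) - 1 : Polynomial Fq) := by
    rw [← Polynomial.map_dvd_map' (algebraMap Fq K)]
    have hmapXn : (X ^ (q ^ m - 1) - 1 : Polynomial Fq).map (algebraMap Fq K) = X ^ (q ^ m - 1) - 1 := by
      simp
    rw [hmapXn, hmapeq]
    have hklt : ∀ k ∈ S ν, k < (q ^ m - 1) := by
      intro k hk
      simp only [hS, Finset.mem_filter, Finset.mem_range] at hk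
      obtain ⟨hkQ, h1, h2⟩ := hk
      have hne : k ≠ (q ^ m) - 1 := by
        intro h
        have := (hωM k hkQ).2 h
        omega
      omega
    have hγn : ((γ : K)) ^ (q ^ m - 1) = 1 := by
      have : γ ^ (q ^ m - 1) = 1 := by rw [← hγord]; exact pow_orderOf_eq_one γ
      calc ((γ : K)) ^ (q ^ m - 1) = ((γ ^ (q ^ m - 1) : Kˣ) : K) := by rw [Units.val_pow_eq_pow_val]
        _ = 1 := by rw [this, Units.val_one]
    set T := (S ν).image (fun k => (γ : K) ^ k) with hT
    have hprodT : ∏ k ∈ S ν, (X - C ((γ : K) ^ k)) = ∏ a ∈ T, (X - C a) := by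
      rw [hT, Finset.prod_image]
      intro a ha b hb hab
      have h1 : γ ^ a = γ ^ b := Units.ext hab
      have := pow_injOn_Iio_orderOf (x := γ)
        (by rw [hγord]; exact Set.mem_Iio.2 (hklt a ha))
        (by rw [hγord]; exact Set.mem_Iio.2 (hklt b hb)) h1
      exact this
    rw [hprodT]
    have hXnne : (X ^ (q ^ m - 1) - 1 : Polynomial K) ≠ 0 := by
      have h := monic_X_pow_sub_C (1 : K) (show (q ^ m - 1) ≠ 0 by omega)
      rw [map_one] at h
      exact h.ne_zero
    have hroots : T.val ≤ (X ^ (q ^ m - 1) - 1 : Polynomial K).roots := by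
      rw [Multiset.le_iff_subset T.nodup]
      intro a ha
      obtain ⟨k, hk, rfl⟩ := Finset.mem_image.1 (by rwa [Finset.mem_val] at ha)
      rw [Polynomial.mem_roots']
      refine ⟨hXnne, ?_⟩
      show Polynomial.eval _ _ = 0
      rw [Polynomial.eval_sub, Polynomial.eval_pow, Polynomial.eval_X, Polynomial.eval_one,
        ← pow_mul, mul_comm k (q ^ m - 1), pow_mul, hγn, one_pow, sub_self]
    have := (Multiset.prod_X_sub_C_dvd_iff_le_roots hXnne T.val).2 hroots
    rw [Finset.prod_eq_multiset_prod]
    exact this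
  -- cofactor G with X^(q ^ m - 1) - 1 = Fpoly ν * G
  obtain ⟨G, hG⟩ := hXn
  have hXnmonic : (X ^ (q ^ m - 1) - 1 : Polynomial Fq).Monic := by
    have h := monic_X_pow_sub_C (1 : Fq) (show (q ^ m - 1) ≠ 0 by omega)
    rwa [map_one] at h
  have hGmonic : G.Monic := (hmonic ν).of_mul_monic_left (hG ▸ hXnmonic)
  have hDν : D ν ≤ (q ^ m - 1) - 1 := hD0 ▸ hDmono 0 ν (by omega)
  have hGdeg : G.natDegree = (q ^ m - 1) - D ν := by
    have h1 : (X ^ (q ^ m - 1) - 1 : Polynomial Fq).natDegree = (q ^ m - 1) := by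
      rw [← Polynomial.C_1, natDegree_X_pow_sub_C]
    rw [hG, (hmonic ν).natDegree_mul hGmonic, hdeg] at h1
    omega
  -- index bookkeeping
  have hkey : ∀ i j, 1 ≤ i → i ≤ ν → j < N (M - i) → D i + j < D (i - 1) := by
    intro i j h1 h2 h3
    have := hDstep i h1 h2
    omega
  have hbound : ∀ (x : {ij : ℕ × ℕ // ij = (0, 0) ∨
      (1 ≤ ij.1 ∧ ij.1 ≤ ν ∧ ij.2 < N (M - ij.1))}),
      D ν ≤ D x.1.1 + x.1.2 ∧ D x.1.1 + x.1.2 ≤ (q ^ m - 1) - 1 := by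
    rintro ⟨⟨i, j⟩, (h | ⟨h1, h2, h3⟩)⟩
    · obtain ⟨rfl, rfl⟩ : i = 0 ∧ j = 0 := by simpa [Prod.ext_iff] using h
      have h5 : D ν ≤ D 0 := hDmono 0 ν (by omega)
      show D ν ≤ D 0 + 0 ∧ D 0 + 0 ≤ (q ^ m - 1) - 1
      omega
    · have hk := hkey i j h1 h2 h3
      have h4 : D (i - 1) ≤ D 0 := hDmono 0 (i - 1) (by omega)
      have h5 : D ν ≤ D i := hDmono i ν h2
      show D ν ≤ D i + j ∧ D i + j ≤ (q ^ m - 1) - 1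
      omega
  have hdeginj : ∀ (x y : {ij : ℕ × ℕ // ij = (0, 0) ∨
      (1 ≤ ij.1 ∧ ij.1 ≤ ν ∧ ij.2 < N (M - ij.1))}),
      D x.1.1 + x.1.2 = D y.1.1 + y.1.2 → x = y := by
    have key : ∀ (x y : {ij : ℕ × ℕ // ij = (0, 0) ∨
        (1 ≤ ij.1 ∧ ij.1 ≤ ν ∧ ij.2 < N (M - ij.1))}),
        x.1.1 < y.1.1 → D y.1.1 + y.1.2 < D x.1.1 + x.1.2 := by
      rintro ⟨⟨i, j⟩, hx⟩ ⟨⟨i', j'⟩, (h | ⟨h1, h2, h3⟩)⟩ hlt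
      · obtain ⟨rfl, rfl⟩ : i' = 0 ∧ j' = 0 := by simpa [Prod.ext_iff] using h
        simp only at hlt
        omega
      · simp only at hlt h1 h2 h3 ⊢
        have hk := hkey i' j' h1 h2 h3
        have h4 : D (i' - 1) ≤ D i := hDmono i (i' - 1) (by omega)
        show D i' + j' < D i + j
        omega
    intro x y h
    rcases lt_trichotomy x.1.1 y.1.1 with hlt | heq | hgt
    · exact absurd h (by have := key x y hlt; omega)
    · have h' := h
      rw [heq] at h'
      have hj : x.1.2 = y.1.2 := by omega
      exact Subtype.ext (Prod.ext heq hj)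
    · exact absurd h (by have := key y x hgt; omega)
  have hdegsurj : ∀ e, D ν ≤ e → e ≤ (q ^ m - 1) - 1 → ∃ x : {ij : ℕ × ℕ // ij = (0, 0) ∨
      (1 ≤ ij.1 ∧ ij.1 ≤ ν ∧ ij.2 < N (M - ij.1))}, D x.1.1 + x.1.2 = e := by
    intro e he1 he2
    by_cases heq : e = (q ^ m - 1) - 1
    · refine ⟨⟨(0, 0), Or.inl rfl⟩, ?_⟩
      show D 0 + 0 = e
      omega
    · have he3 : e < D 0 := by omega
      have hex : ∃ i, D i ≤ e := ⟨ν, he1⟩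
      have hfind : D (Nat.find hex) ≤ e := Nat.find_spec hex
      have hi₀ν : Nat.find hex ≤ ν := Nat.find_min' hex he1
      have hi₀0 : Nat.find hex ≠ 0 := by intro h; rw [h] at hfind; omega
      have hmin : ¬ D (Nat.find hex - 1) ≤ e := Nat.find_min hex (by omega)
      have hstep := hDstep (Nat.find hex) (by omega) hi₀ν
      refine ⟨⟨(Nat.find hex, e - D (Nat.find hex)),
        Or.inr ⟨show 1 ≤ Nat.find hex by omega, show Nat.find hex ≤ ν from hi₀ν,
          show e - D (Nat.find hex) < N (M - Nat.find hex) by omega⟩⟩, ?_⟩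
      show D (Nat.find hex) + (e - D (Nat.find hex)) = e
      omega
  -- the bijection with Fin ((q ^ m - 1) - D ν)
  have hbij : Function.Bijective (fun x : {ij : ℕ × ℕ // ij = (0, 0) ∨
      (1 ≤ ij.1 ∧ ij.1 ≤ ν ∧ ij.2 < N (M - ij.1))} =>
      (⟨D x.1.1 + x.1.2 - D ν, by have := hbound x; omega⟩ : Fin ((q ^ m - 1) - D ν))) := by
    constructor
    · intro x y h
      simp only [Fin.mk.injEq] at h
      have hx := hbound x
      have hy := hbound y
      exact hdeginj x y (by omega)
    · rintro ⟨v, hv⟩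
      obtain ⟨x, hx⟩ := hdegsurj (v + D ν) (by omega) (by omega)
      exact ⟨x, by simp only [Fin.mk.injEq]; omega⟩
  have hcard : Nat.card {ij : ℕ × ℕ // ij = (0, 0) ∨
      (1 ≤ ij.1 ∧ ij.1 ≤ ν ∧ ij.2 < N (M - ij.1))} = (q ^ m - 1) - D ν := by
    rw [Nat.card_congr (Equiv.ofBijective _ hbij), Nat.card_eq_fintype_card, Fintype.card_fin]
  have instF : Fintype {ij : ℕ × ℕ // ij = (0, 0) ∨
      (1 ≤ ij.1 ∧ ij.1 ≤ ν ∧ ij.2 < N (M - ij.1))} :=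
    Fintype.ofEquiv _ (Equiv.ofBijective _ hbij).symm
  -- the polynomial family
  set P : {ij : ℕ × ℕ // ij = (0, 0) ∨ (1 ≤ ij.1 ∧ ij.1 ≤ ν ∧ ij.2 < N (M - ij.1))} →
      Polynomial Fq := fun x => X ^ x.1.2 * Fpoly x.1.1 with hP
  have hPmonic : ∀ x, (P x).Monic := fun x => (monic_X_pow _).mul (hmonic _)
  have hPdeg : ∀ x, (P x).natDegree = D x.1.1 + x.1.2 := by
    intro x
    show (X ^ x.1.2 * Fpoly x.1.1).natDegree = _
    rw [(monic_X_pow _).natDegree_mul (hmonic _), natDegree_X_pow, hdeg]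
    omega
  have hPLI : LinearIndependent Fq P :=
    aux_li P hPmonic (fun x y h => hdeginj x y (by rw [← hPdeg, ← hPdeg]; exact h))
  -- the quotient family
  set E : {ij : ℕ × ℕ // ij = (0, 0) ∨ (1 ≤ ij.1 ∧ ij.1 ≤ ν ∧ ij.2 < N (M - ij.1))} →
      (Polynomial Fq ⧸ (Ideal.span {X ^ (q ^ m - 1) - 1} : Ideal (Polynomial Fq))) :=
    fun x => Ideal.Quotient.mk (Ideal.span {X ^ (q ^ m - 1) - 1}) (P x) with hE
  have hmkL : ∀ pp : Polynomial Fq,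
      (Ideal.Quotient.mkₐ Fq (Ideal.span {X ^ (q ^ m - 1) - 1} : Ideal (Polynomial Fq))).toLinearMap pp =
      Ideal.Quotient.mk (Ideal.span {X ^ (q ^ m - 1) - 1}) pp := fun pp => rfl
  have hELI : LinearIndependent Fq E := by
    rw [linearIndependent_iff']
    intro s c hsum
    have h1 : Ideal.Quotient.mk (Ideal.span {X ^ (q ^ m - 1) - 1} : Ideal (Polynomial Fq))
        (∑ x ∈ s, c x • P x) = 0 := by
      rw [← hmkL, map_sum]
      simp_rw [map_smul]
      simp_rw [hmkL]
      exact hsum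
    have h2 : (X ^ (q ^ m - 1) - 1 : Polynomial Fq) ∣ ∑ x ∈ s, c x • P x := by
      rwa [Ideal.Quotient.eq_zero_iff_mem, Ideal.mem_span_singleton] at h1
    have h3 : (∑ x ∈ s, c x • P x).natDegree < (q ^ m - 1) := by
      have hle : (∑ x ∈ s, c x • P x).natDegree ≤ (q ^ m - 1) - 1 :=
        natDegree_sum_le_of_forall_le s _ (fun x _ =>
          (natDegree_smul_le _ _).trans (by rw [hPdeg]; exact (hbound x).2))
      omega
    have h4 : ∑ x ∈ s, c x • P x = 0 :=
      Polynomial.eq_zero_of_dvd_of_natDegree_lt h2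
        (by rwa [← Polynomial.C_1, natDegree_X_pow_sub_C])
    exact fun i hi => linearIndependent_iff'.1 hPLI s c h4 i hi
  -- the submodule W
  set W := Submodule.restrictScalars Fq (Ideal.span
      {Ideal.Quotient.mk (Ideal.span {X ^ (q ^ m - 1) - 1} : Ideal (Polynomial Fq)) (Fpoly ν)}) with hW
  have hmemW : ∀ x, E x ∈ W := by
    intro x
    have hiν : x.1.1 ≤ ν := by
      rcases x.2 with h | h
      · rw [show x.1.1 = 0 from congrArg Prod.fst h]; omega
      · exact h.2.1
    obtain ⟨c, hc⟩ := hdvd x.1.1 ν hiν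
    show E x ∈ Ideal.span {Ideal.Quotient.mk (Ideal.span {X ^ (q ^ m - 1) - 1}) (Fpoly ν)}
    rw [Ideal.mem_span_singleton]
    refine ⟨Ideal.Quotient.mk _ (X ^ x.1.2 * c), ?_⟩
    show Ideal.Quotient.mk (Ideal.span {X ^ (q ^ m - 1) - 1}) (X ^ x.1.2 * Fpoly x.1.1) = _
    rw [← map_mul]
    congr 1
    rw [hc]; ring
  have hWle : W ≤ Submodule.span Fq (Set.range (fun j : Fin ((q ^ m - 1) - D ν) =>
      Ideal.Quotient.mk (Ideal.span {X ^ (q ^ m - 1) - 1} : Ideal (Polynomial Fq))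
        (X ^ (j : ℕ) * Fpoly ν))) := by
    intro x hx
    have hx' : x ∈ Ideal.span {Ideal.Quotient.mk
        (Ideal.span {X ^ (q ^ m - 1) - 1} : Ideal (Polynomial Fq)) (Fpoly ν)} := hx
    obtain ⟨a, ha⟩ := Ideal.mem_span_singleton'.1 hx'
    obtain ⟨h, rfl⟩ := Ideal.Quotient.mk_surjective a
    have hGne1 : G ≠ 1 := by
      intro h1
      rw [h1, natDegree_one] at hGdeg
      omega
    have hrrdeg : (h %ₘ G).natDegree < (q ^ m - 1) - D ν := by
      rw [← hGdeg]
      exact natDegree_modByMonic_lt h hGmonic hGne1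
    have hxeq : x = Ideal.Quotient.mk (Ideal.span {X ^ (q ^ m - 1) - 1}) ((h %ₘ G) * Fpoly ν) := by
      rw [← ha, ← map_mul, Ideal.Quotient.eq]
      have hdecomp : h * Fpoly ν - (h %ₘ G) * Fpoly ν = (X ^ (q ^ m - 1) - 1) * (h /ₘ G) := by
        have hdiv := modByMonic_add_div h G
        rw [hG]
        linear_combination (-(Fpoly ν)) * hdiv
      rw [hdecomp, Ideal.mem_span_singleton]
      exact Dvd.intro _ rfl
    rw [hxeq, Polynomial.as_sum_range' (h %ₘ G) ((q ^ m - 1) - D ν) hrrdeg, Finset.sum_mul, map_sum]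
    apply Submodule.sum_mem
    intro j hj
    have : Polynomial.monomial j ((h %ₘ G).coeff j) * Fpoly ν =
        ((h %ₘ G).coeff j) • (X ^ j * Fpoly ν) := by
      rw [← Polynomial.C_mul_X_pow_eq_monomial, Polynomial.smul_eq_C_mul]; ring
    rw [this, ← hmkL, map_smul, hmkL]
    exact Submodule.smul_mem _ _ (Submodule.subset_span
      ⟨⟨j, Finset.mem_range.1 hj⟩, rfl⟩)
  -- finite dimensionality and dimension counts
  have hFDspanb : FiniteDimensional Fq (Submodule.span Fq (Set.range (fun j : Fin ((q ^ m - 1) - D ν) =>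
      Ideal.Quotient.mk (Ideal.span {X ^ (q ^ m - 1) - 1} : Ideal (Polynomial Fq))
        (X ^ (j : ℕ) * Fpoly ν)))) :=
    FiniteDimensional.span_of_finite _ (Set.finite_range _)
  have hFDW : FiniteDimensional Fq W := Submodule.finiteDimensional_of_le hWle
  have hfrWle : Module.finrank Fq W ≤ (q ^ m - 1) - D ν := by
    refine le_trans (Submodule.finrank_mono hWle) ?_
    refine le_trans (finrank_range_le_card _) ?_
    simp
  have hspanle : Submodule.span Fq (Set.range E) ≤ W :=
    Submodule.span_le.2 (by rintro _ ⟨x, rfl⟩; exact hmemW x)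
  have hcardF : Fintype.card {ij : ℕ × ℕ // ij = (0, 0) ∨
      (1 ≤ ij.1 ∧ ij.1 ≤ ν ∧ ij.2 < N (M - ij.1))} = (q ^ m - 1) - D ν := by
    rw [← Nat.card_eq_fintype_card, hcard]
  have hfre : Module.finrank Fq (Submodule.span Fq (Set.range E)) = (q ^ m - 1) - D ν := by
    rw [finrank_span_eq_card hELI, hcardF]
  have hspanEW : Submodule.span Fq (Set.range E) = W :=
    Submodule.eq_of_le_of_finrank_le hspanle (by rw [hfre]; exact hfrWle)
  have hfun : (fun x : {ij : ℕ × ℕ // ij = (0, 0) ∨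
      (1 ≤ ij.1 ∧ ij.1 ≤ ν ∧ ij.2 < N (M - ij.1))} => θ x.1.1 x.1.2) = ⇑φ ∘ E := by
    funext x
    rw [hθ]
    rfl
  refine ⟨?_, ?_, ?_⟩
  · rw [hfun]
    exact hELI.map' φ (LinearMap.ker_eq_bot.2 hφinj)
  · rw [hfun, Set.range_comp, Submodule.span_image, hspanEW, hCode ν, ← hW]
  · rw [hcard, hCode ν, ← hW]
    rw [← (Submodule.equivMapOfInjective φ hφinj W).finrank_eq, ← hspanEW, hfre]
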